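/- Let C_0 = {(log|z_1|,…,log|z_n|) : |z_1|² + ⋯ + |z_n|² < 1} ⊂ ℝⁿ and let f, g be convex functions on C_0 increasing in each variable with f = g = 0 on ∂C_0. If lim_{c→+∞} P_{C_0}(f, g+c) = f holds everywhere on C_0, then for each a ∈ C_0 and each b ∈ ℕⁿ with strictly positive entries, lim_{t→−∞} f(a+tb)/t ≥ lim_{t→−∞} g(a+tb)/t. -/

import Mathlib

open Filter MeasureTheory Metric Set
open scoped ENNReal Topology

noncomputable section

/-- The logarithmic image of the unit ball:
`C₀ = {(log|z₁|,…,log|zₙ|) : Σ|zᵢ|² < 1} = {x : Σ e^{2xᵢ} < 1}`. -/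
def C0 (n : ℕ) : Set (Fin n → ℝ) := {x | ∑ i, Real.exp (2 * x i) < 1}

/-- The convex envelope `P_{C₀}(f, g+c)(x)`: the supremum at `x` of all convex functions on
`C₀` lying below `min(f, g+c)` on `C₀`. -/
def convEnv (n : ℕ) (f g : (Fin n → ℝ) → ℝ) (c : ℝ) (x : Fin n → ℝ) : EReal :=
  ⨆ (u : (Fin n → ℝ) → ℝ) (_ : ConvexOn ℝ (C0 n) u ∧
      ∀ y ∈ C0 n, u y ≤ min (f y) (g y + c)), ((u x : ℝ) : EReal)

/-- The slope at infinity of `h` along the ray `t ↦ a + t b`, `t → -∞`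
(for convex `h` the `limsup` is an honest limit). -/
def raySlope (n : ℕ) (h : (Fin n → ℝ) → ℝ) (a b : Fin n → ℝ) : EReal :=
  Filter.limsup (fun t : ℝ => ((h (a + t • b) / t : ℝ) : EReal)) atBot

lemma tendsto_inv_atBot_zero' : Tendsto (fun r : ℝ => r⁻¹) atBot (𝓝 0) := by
  have h := ((tendsto_neg_atBot_atTop : Tendsto (fun r : ℝ => -r) atBot atTop).inv_tendsto_atTop).neg
  rw [neg_zero] at h
  exact h.congr fun t => by rw [Pi.inv_apply]; rw [inv_neg, neg_neg]

lemma C0_isOpen (n : ℕ) : IsOpen (C0 n) := by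
  have hc : Continuous fun x : Fin n → ℝ => ∑ i, Real.exp (2 * x i) := by
    apply continuous_finset_sum
    intro i _
    exact Real.continuous_exp.comp ((continuous_const.mul (continuous_apply i)))
  exact isOpen_lt hc continuous_const

lemma mem_C0_of_le {n : ℕ} {x y : Fin n → ℝ} (h : ∀ i, x i ≤ y i) (hy : y ∈ C0 n) :
    x ∈ C0 n := by
  simp only [C0, mem_setOf_eq] at hy ⊢
  refine lt_of_le_of_lt ?_ hy
  exact Finset.sum_le_sum fun i _ => Real.exp_le_exp.mpr (by linarith [h i])

/-- A monotone function with zero boundary values is nonpositive on `C₀` (n ≥ 1). -/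
lemma C0_nonpos (n : ℕ) (hn : 0 < n) (f : (Fin n → ℝ) → ℝ)
    (hmono : ∀ x ∈ C0 n, ∀ y ∈ C0 n, (∀ i, x i ≤ y i) → f x ≤ f y)
    (hbd : ∀ x ∈ frontier (C0 n), Tendsto f (𝓝[C0 n] x) (𝓝 (0 : ℝ))) :
    ∀ x ∈ C0 n, f x ≤ 0 := by
  intro x hx
  have : Nonempty (Fin n) := ⟨⟨0, hn⟩⟩
  set S := ∑ i, Real.exp (2 * x i) with hS
  have hS0 : 0 < S := Finset.sum_pos (fun i _ => Real.exp_pos _) Finset.univ_nonempty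
  have hS1 : S < 1 := hx
  set s' := -Real.log S / 2 with hs'def
  have hs' : 0 < s' := by
    have := Real.log_neg hS0 hS1
    simp only [hs'def]; linarith
  set y : ℝ → (Fin n → ℝ) := fun s i => x i + s with hy
  have hsum : ∀ s : ℝ, ∑ i, Real.exp (2 * y s i) = S * Real.exp (2 * s) := by
    intro s
    rw [hS, Finset.sum_mul]
    refine Finset.sum_congr rfl fun i _ => ?_
    rw [← Real.exp_add]
    congr 1
    simp only [hy]
    ring
  have hSeq : S * Real.exp (2 * s') = 1 := by
    have : (2 : ℝ) * s' = -Real.log S := by rw [hs'def]; ring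
    rw [this, Real.exp_neg, Real.exp_log hS0]
    field_simp
  have hys : ∀ s < s', y s ∈ C0 n := by
    intro s hs
    show ∑ i, Real.exp (2 * y s i) < 1
    rw [hsum, ← hSeq]
    exact mul_lt_mul_of_pos_left (Real.exp_lt_exp.mpr (by linarith)) hS0
  have hycont : Continuous y := continuous_pi fun i => continuous_const.add continuous_id
  have hy_tendsto : Tendsto y (𝓝[<] s') (𝓝 (y s')) :=
    (hycont.tendsto s').mono_left nhdsWithin_le_nhds
  have hmem_ev : ∀ᶠ s in 𝓝[<] s', y s ∈ C0 n :=
    eventually_mem_nhdsWithin.mono fun s hs => hys s hs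
  have hp_not : y s' ∉ C0 n := by
    show ¬ (∑ i, Real.exp (2 * y s' i) < 1)
    rw [hsum, hSeq]
    exact lt_irrefl 1
  have hp_front : y s' ∈ frontier (C0 n) := by
    constructor
    · exact mem_closure_of_tendsto hy_tendsto hmem_ev
    · rw [(C0_isOpen n).interior_eq]; exact hp_not
  have htend : Tendsto (fun s => f (y s)) (𝓝[<] s') (𝓝 0) :=
    (hbd _ hp_front).comp (tendsto_nhdsWithin_iff.mpr ⟨hy_tendsto, hmem_ev⟩)
  refine ge_of_tendsto htend ?_
  filter_upwards [Ioo_mem_nhdsLT_of_mem (⟨hs', le_refl s'⟩ : s' ∈ Ioc 0 s')] with s hs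
  exact hmono x hx (y s) (hys s hs.2) fun i => by simp only [hy]; linarith [hs.1]

/-- Let `f, g` be convex functions on `C₀` increasing in each variable with
boundary values `0`.  If `lim_{c→∞} P_{C₀}(f,g+c) = f` everywhere on `C₀`, then
`lim_{t→-∞} f(a+tb)/t ≥ lim_{t→-∞} g(a+tb)/t` for all `a ∈ C₀`, `b ∈ ℕⁿ` with positive
entries. -/
theorem raySlope_of_convEnv_tendsto (n : ℕ) (f g : (Fin n → ℝ) → ℝ)
    (hfconv : ConvexOn ℝ (C0 n) f) (hgconv : ConvexOn ℝ (C0 n) g)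
    (hfmono : ∀ x ∈ C0 n, ∀ y ∈ C0 n, (∀ i, x i ≤ y i) → f x ≤ f y)
    (hgmono : ∀ x ∈ C0 n, ∀ y ∈ C0 n, (∀ i, x i ≤ y i) → g x ≤ g y)
    (hfbd : ∀ x ∈ frontier (C0 n), Tendsto f (𝓝[C0 n] x) (𝓝 (0 : ℝ)))
    (hgbd : ∀ x ∈ frontier (C0 n), Tendsto g (𝓝[C0 n] x) (𝓝 (0 : ℝ)))
    (hconv : ∀ x ∈ C0 n,
      Tendsto (fun c : ℝ => convEnv n f g c x) atTop (𝓝 ((f x : ℝ) : EReal))) :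
    ∀ a ∈ C0 n, ∀ b : Fin n → ℕ, (∀ i, 0 < b i) →
      raySlope n g a (fun i => (b i : ℝ)) ≤ raySlope n f a (fun i => (b i : ℝ)) := by
  intro a ha b hb
  set b' : Fin n → ℝ := fun i => (b i : ℝ) with hb'
  rcases Nat.eq_zero_or_pos n with rfl | hn
  · -- degenerate case n = 0 : the ray is constant, both slopes are 0
    have hxconst : ∀ t : ℝ, a + t • b' = a := fun t => Subsingleton.elim _ _
    have lim0 : ∀ h : (Fin 0 → ℝ) → ℝ, raySlope 0 h a b' = 0 := by
      intro h
      have h1 : Tendsto (fun t : ℝ => h (a + t • b') / t) atBot (𝓝 0) := by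
        simp only [hxconst]
        have := tendsto_inv_atBot_zero'.const_mul (h a)
        simpa [div_eq_mul_inv] using this
      have h2 : Tendsto (fun t : ℝ => ((h (a + t • b') / t : ℝ) : EReal)) atBot
          (𝓝 ((0 : ℝ) : EReal)) := EReal.tendsto_coe.mpr h1
      have := h2.limsup_eq
      simpa [raySlope] using this
    rw [lim0 f, lim0 g]
  · -- main case n ≥ 1
    have hb0 : ∀ i, (0 : ℝ) ≤ b' i := fun i => by positivity
    have hmemray : ∀ t : ℝ, t ≤ 0 → a + t • b' ∈ C0 n := by
      intro t ht
      refine mem_C0_of_le (fun i => ?_) ha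
      have : t * b' i ≤ 0 := mul_nonpos_of_nonpos_of_nonneg ht (hb0 i)
      simp only [Pi.add_apply, Pi.smul_apply, smul_eq_mul]
      linarith
    -- a point tp > 0 still inside C0 along the ray
    obtain ⟨tp, htp0, hxp⟩ : ∃ tp : ℝ, 0 < tp ∧ a + tp • b' ∈ C0 n := by
      have hcont : Continuous fun t : ℝ => a + t • b' :=
        continuous_const.add (continuous_id.smul continuous_const)
      have hopen : IsOpen ((fun t : ℝ => a + t • b') ⁻¹' C0 n) :=
        (C0_isOpen n).preimage hcont
      have h0 : (0 : ℝ) ∈ (fun t : ℝ => a + t • b') ⁻¹' C0 n := by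
        simp only [mem_preimage, zero_smul, add_zero]; exact ha
      obtain ⟨ε, hε, hball⟩ := Metric.isOpen_iff.mp hopen 0 h0
      refine ⟨ε / 2, by linarith, hball ?_⟩
      rw [Metric.mem_ball, Real.dist_eq, sub_zero, abs_of_pos (by linarith : (0:ℝ) < ε/2)]
      linarith
    have hfnonpos := C0_nonpos n hn f hfmono hfbd
    -- main claim
    have key : ∀ m : ℝ, (m : EReal) < raySlope n g a b' → (m : EReal) ≤ raySlope n f a b' := by
      intro m hm
      have h0 : ∃ᶠ t in atBot, (m : EReal) <
          ((g (a + t • b') / t : ℝ) : EReal) :=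
        frequently_lt_of_lt_limsup (by isBoundedDefault) hm
      have hfreq : ∃ᶠ t in atBot, g (a + t • b') < m * t := by
        refine (h0.and_eventually (eventually_lt_atBot 0)).mono ?_
        rintro t ⟨h1, h2⟩
        rw [EReal.coe_lt_coe_iff] at h1
        exact (lt_div_iff_of_neg h2).mp h1
      -- crucial estimate
      have hest : ∀ t₀ < 0, f (a + t₀ • b') ≤ m * (t₀ - tp) := by
        intro t₀ ht₀
        have hx₀ : a + t₀ • b' ∈ C0 n := hmemray t₀ ht₀.le
        refine le_of_forall_pos_le_add ?_
        intro ε hε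
        have hbound : ∀ c : ℝ, convEnv n f g c (a + t₀ • b') ≤
            ((m * (t₀ - tp) + ε : ℝ) : EReal) := by
          intro c
          refine iSup₂_le ?_
          rintro u ⟨hucvx, hule⟩
          set A := |m| * tp + |c| + 1 with hA
          have hApos : 0 < A := by positivity
          set K := min (t₀ - 1) (tp - (tp - t₀) * A / ε) with hK
          obtain ⟨tm, htK, hgt⟩ : ∃ tm ≤ K, g (a + tm • b') < m * tm :=
            frequently_atBot.mp hfreq K
          have htm0 : tm < t₀ := by
            have := htK.trans (min_le_left _ _)
            linarith
          have hden : 0 < tp - tm := by linarith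
          have hxm : a + tm • b' ∈ C0 n := hmemray tm (by linarith)
          set lam := (tp - t₀) / (tp - tm) with hlam
          have hlam0 : 0 < lam := div_pos (by linarith) hden
          have hlam1 : lam < 1 := (div_lt_one hden).mpr (by linarith)
          have hsum : lam * tm + (1 - lam) * tp = t₀ := by
            rw [hlam]
            field_simp
            ring
          have hxeq : lam • (a + tm • b') + (1 - lam) • (a + tp • b') = a + t₀ • b' := by
            funext i
            simp only [Pi.add_apply, Pi.smul_apply, smul_eq_mul]
            linear_combination (b' i) * hsum
          have hcu : u (a + t₀ • b') ≤ lam * u (a + tm • b') + (1 - lam) * u (a + tp • b') := by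
            have := hucvx.2 hxm hxp hlam0.le (by linarith : (0:ℝ) ≤ 1 - lam) (by ring)
            rw [hxeq] at this
            simpa using this
          have h1 : u (a + tm • b') ≤ m * tm + c := by
            have := (hule _ hxm).trans (min_le_right _ _)
            linarith
          have h2 : u (a + tp • b') ≤ 0 :=
            (hule _ hxp).trans ((min_le_left _ _).trans (hfnonpos _ hxp))
          -- bound on lam * A
          have hKle : tm ≤ tp - (tp - t₀) * A / ε := htK.trans (min_le_right _ _)
          have hlamA : lam * A ≤ ε := by
            have h3 : (tp - t₀) * A / ε ≤ tp - tm := by linarith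
            have h4 : (tp - t₀) * A ≤ (tp - tm) * ε := by
              have := (div_le_iff₀ hε).mp h3
              linarith
            rw [hlam, div_mul_eq_mul_div, div_le_iff₀ hden]
            linarith
          -- assemble
          rw [show (((m * (t₀ - tp) + ε : ℝ)) : EReal) = ((m * (t₀ - tp) + ε : ℝ) : EReal) from rfl]
          rw [EReal.coe_le_coe_iff]
          have s1 : u (a + t₀ • b') ≤ lam * (m * tm + c) := by
            have e1 := mul_le_mul_of_nonneg_left h1 hlam0.le
            have e2 := mul_le_mul_of_nonneg_left h2 (by linarith : (0:ℝ) ≤ 1 - lam)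
            linarith
          have s2 : lam * (m * tm + c) = m * (t₀ - tp) + (m * (lam * tp) + lam * c) := by
            linear_combination m * hsum
          have s3 : m * (lam * tp) ≤ |m| * (lam * tp) :=
            mul_le_mul_of_nonneg_right (le_abs_self m) (by positivity)
          have s4 : lam * c ≤ lam * |c| :=
            mul_le_mul_of_nonneg_left (le_abs_self c) hlam0.le
          have s5 : |m| * (lam * tp) + lam * |c| ≤ lam * A := by
            rw [hA]
            nlinarith [hlam0.le]
          linarith
        have hfle : ((f (a + t₀ • b') : ℝ) : EReal) ≤ ((m * (t₀ - tp) + ε : ℝ) : EReal) :=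
          le_of_tendsto (hconv _ hx₀) (Eventually.of_forall hbound)
        rw [EReal.coe_le_coe_iff] at hfle
        linarith
      -- from the estimate to the slope inequality
      have hev : ∀ᶠ t in atBot, ((m - m * tp / t : ℝ) : EReal) ≤
          ((f (a + t • b') / t : ℝ) : EReal) := by
        filter_upwards [eventually_lt_atBot (0 : ℝ)] with t ht
        rw [EReal.coe_le_coe_iff, le_div_iff_of_neg ht]
        have := hest t ht
        have htne : t ≠ 0 := ht.ne
        have : (m - m * tp / t) * t = m * (t - tp) := by
          field_simp
        rw [this]
        have := hest t ht
        linarith [hest t ht]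
      have hlim : Tendsto (fun t : ℝ => ((m - m * tp / t : ℝ) : EReal)) atBot
          (𝓝 ((m : ℝ) : EReal)) := by
        refine EReal.tendsto_coe.mpr ?_
        have h1 : Tendsto (fun t : ℝ => m * tp / t) atBot (𝓝 0) := by
          have := tendsto_inv_atBot_zero'.const_mul (m * tp)
          simpa [div_eq_mul_inv] using this
        have h2 := (tendsto_const_nhds : Tendsto (fun _ : ℝ => m) atBot (𝓝 m)).sub h1
        simpa using h2
      calc (m : EReal) = limsup (fun t : ℝ => ((m - m * tp / t : ℝ) : EReal)) atBot :=
            hlim.limsup_eq.symm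
        _ ≤ raySlope n f a b' := limsup_le_limsup hev
    by_contra hcon
    push_neg at hcon
    obtain ⟨m, hm1, hm2⟩ := EReal.exists_between_coe_real hcon
    exact absurd (key m hm2) (not_le.mpr hm1)

end
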